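/- Let $\varphi_n$ be defined by the recursion $\varphi_1 = \mathbf{1} - u_0$ and $\varphi_n = \mathbf{1} - u_{n-1} - \varphi_{n-1}^{-1} v_{n-1}$ for $n \geq 2$, where $u_{n-1} = \zeta_{2n-1} + \zeta_{2n-2}$ (with $\zeta_0 = \mathbf{0}$), $v_{n-1} = \zeta_{2n-3}\zeta_{2n-2}$, $\zeta_1 = U_1$, $\zeta_k = (\mathbf{1} - U_{k-1})U_k$ for $k > 1$, and $V_k = \mathbf{1} - U_k$ with $V_0 = \mathbf{1}$. If all matrices $V_k$ are invertible, then $\varphi_n = V_{2n-2} V_{2n-1}$ for all $n \geq 1$. -/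
import Mathlib

lemma inv_comm_one_sub {p : ℕ} (A : Matrix (Fin p) (Fin p) ℂ)
    (h : IsUnit A) : A⁻¹ * (1 - A) = (1 - A) * A⁻¹ := by
  have hd : IsUnit A.det := (Matrix.isUnit_iff_isUnit_det A).mp h
  have h1 : A⁻¹ * A = 1 := Matrix.nonsing_inv_mul A hd
  have h2 : A * A⁻¹ = 1 := Matrix.mul_nonsing_inv A hd
  rw [Matrix.mul_sub, Matrix.sub_mul, Matrix.mul_one, Matrix.one_mul, h1, h2]

theorem phi_recursion_solution (p : ℕ)
    (U ζ u v φ : ℕ → Matrix (Fin p) (Fin p) ℂ)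
    (hU0 : U 0 = 0)
    (hζ0 : ζ 0 = 0) (hζ1 : ζ 1 = U 1)
    (hζ : ∀ k, 2 ≤ k → ζ k = (1 - U (k - 1)) * U k)
    (hu : ∀ k, u k = ζ (2 * k + 1) + ζ (2 * k))
    (hv : ∀ k, 1 ≤ k → v k = ζ (2 * k - 1) * ζ (2 * k))
    (hφ1 : φ 1 = 1 - u 0)
    (hφ : ∀ k, 2 ≤ k → φ k = 1 - u (k - 1) - (φ (k - 1))⁻¹ * v (k - 1))
    (hinv : ∀ k, IsUnit ((1 : Matrix (Fin p) (Fin p) ℂ) - U k)) :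
    ∀ n, 1 ≤ n → φ n = (1 - U (2 * n - 2)) * (1 - U (2 * n - 1)) := by
  intro n hn
  induction n, hn using Nat.le_induction with
  | base =>
    simp [hφ1, hu 0, hζ0, hζ1, hU0]
  | succ k hk ih =>
    have h2 : 2 ≤ k + 1 := by omega
    have e1 : k + 1 - 1 = k := rfl
    have e2 : 2 * (k + 1) - 2 = 2 * k := by omega
    have e3 : 2 * (k + 1) - 1 = 2 * k + 1 := by omega
    rw [hφ (k + 1) h2, e1, e2, e3, hu k, hv k hk, ih]
    have hζa : ζ (2 * k + 1) = (1 - U (2 * k)) * U (2 * k + 1) := by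
      have := hζ (2 * k + 1) (by omega); simpa using this
    have hζb : ζ (2 * k) = (1 - U (2 * k - 1)) * U (2 * k) := by
      have := hζ (2 * k) (by omega)
      have e : 2 * k - 1 = 2 * k - 1 := rfl
      simpa using this
    have hζc : ζ (2 * k - 1) = (1 - U (2 * k - 2)) * U (2 * k - 1) := by
      rcases eq_or_lt_of_le hk with h | h
      · subst h
        simpa [hU0] using hζ1
      · have := hζ (2 * k - 1) (by omega)
        have e : 2 * k - 1 - 1 = 2 * k - 2 := by omega
        rw [e] at this
        exact this
    rw [hζa, hζb, hζc]
    set A := 1 - U (2 * k - 2) with hA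
    set B := 1 - U (2 * k - 1) with hB
    set C := 1 - U (2 * k) with hC
    have hUa : U (2 * k - 1) = 1 - B := by rw [hB, sub_sub_cancel]
    have hUA : IsUnit A := hinv _
    have hUB : IsUnit B := hinv _
    have hdA : IsUnit A.det := (Matrix.isUnit_iff_isUnit_det A).mp hUA
    have hdB : IsUnit B.det := (Matrix.isUnit_iff_isUnit_det B).mp hUB
    have hBB : B⁻¹ * B = 1 := Matrix.nonsing_inv_mul B hdB
    have hAA : A⁻¹ * A = 1 := Matrix.nonsing_inv_mul A hdA
    have key : (A * B)⁻¹ * (A * U (2 * k - 1) * (B * U (2 * k)))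
        = U (2 * k) - B * U (2 * k) := by
      rw [Matrix.mul_inv_rev, hUa]
      calc B⁻¹ * A⁻¹ * (A * (1 - B) * (B * U (2 * k)))
          = B⁻¹ * ((A⁻¹ * A) * ((1 - B) * (B * U (2 * k)))) := by
            simp only [Matrix.mul_assoc]
        _ = B⁻¹ * ((1 - B) * (B * U (2 * k))) := by rw [hAA, Matrix.one_mul]
        _ = (B⁻¹ * (1 - B)) * B * U (2 * k) := by simp only [Matrix.mul_assoc]
        _ = ((1 - B) * B⁻¹) * B * U (2 * k) := by rw [inv_comm_one_sub B hUB]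
        _ = (1 - B) * (B⁻¹ * B) * U (2 * k) := by simp only [Matrix.mul_assoc]
        _ = U (2 * k) - B * U (2 * k) := by
            rw [hBB, Matrix.mul_one, Matrix.sub_mul, Matrix.one_mul]
    rw [key]

    rw [hC]; noncomm_ring
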